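/- Let S ⊆ R be a rationally closed subring (i.e., U(R) ∩ S = U(S)). Then √Δ(R) ∩ S ⊆ √Δ(S). -/
import Mathlib


/-- Δ(R) = {x : 1 + x*u is a unit for every unit u}. -/
def Delta (R : Type*) [Ring R] : Set R :=
  {x | ∀ u : R, IsUnit u → IsUnit (1 + x * u)}

/-- √Δ(R) = {x : x^n ∈ Δ(R) for some n ≥ 1}. -/
def sqrtDelta (R : Type*) [Ring R] : Set R :=
  {x | ∃ n : ℕ, 1 ≤ n ∧ x ^ n ∈ Delta R}

theorem stmt_19 {R : Type*} [Ring R] (S : Subring R)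
    (hrc : ∀ x : S, IsUnit (x : R) ↔ IsUnit x) :
    ∀ x : S, (x : R) ∈ sqrtDelta R → x ∈ sqrtDelta S := by
  rintro x ⟨n, hn, hd⟩
  refine ⟨n, hn, fun u hu => ?_⟩
  rw [← hrc]
  have : IsUnit ((u : R)) := (hrc u).mpr hu
  have := hd (u : R) this
  simpa using this
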